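/- Let T : D → D be a weak-contraction with fixed point u* and T̃ an approximate operator of T with ‖Tx − T̃x‖ ≤ ε for all x ∈ D. Let {x_n} be the Picard-S sequence for T and {x̃_n} the Picard-S sequence for T̃, with a_n¹, a_n² ∈ [0,1] satisfying 1/2 ≤ a_n¹ a_n² and ∑ a_n¹ a_n² = ∞. Then for each n: ‖x_{n+1} − x̃_{n+1}‖ ≤ [1 − a_n¹ a_n²(1−δ)] ‖x_n − x̃_n‖ + a_n¹ a_n²(1−δ) · [Lδ(1+δ)‖x_n − Tx_n‖ + 2L‖y_n − Ty_n‖ + 2δL‖z_n − Tz_n‖ + 5ε] / (1−δ). -/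

import Mathlib

set_option maxHeartbeats 1600000 in
theorem data_dependence_step {E : Type*} [NormedAddCommGroup E] [NormedSpace ℝ E]
    (D : Set E) (hDne : D.Nonempty) (hDcl : IsClosed D) (hDconv : Convex ℝ D)
    (T S : E → E) (hTD : Set.MapsTo T D D) (hSD : Set.MapsTo S D D)
    (δ L : ℝ) (hδ : δ ∈ Set.Ioo (0 : ℝ) 1) (hL : 0 ≤ L)
    (hT : ∀ x ∈ D, ∀ y ∈ D, ‖T x - T y‖ ≤ δ * ‖x - y‖ + L * ‖y - T y‖)
    (ε : ℝ) (hε : 0 < ε) (happrox : ∀ x ∈ D, ‖T x - S x‖ ≤ ε)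
    (a1 a2 : ℕ → ℝ)
    (ha1 : ∀ n, a1 n ∈ Set.Icc (0 : ℝ) 1) (ha2 : ∀ n, a2 n ∈ Set.Icc (0 : ℝ) 1)
    (hhalf : ∀ n, (1 : ℝ) / 2 ≤ a1 n * a2 n)
    (hdiv : Filter.Tendsto (fun N => ∑ k ∈ Finset.range N, a1 k * a2 k) Filter.atTop Filter.atTop)
    (x y z : ℕ → E) (hxD : ∀ n, x n ∈ D) (hyD : ∀ n, y n ∈ D) (hzD : ∀ n, z n ∈ D)
    (hx : ∀ n, x (n + 1) = T (y n))
    (hy : ∀ n, y n = (1 - a1 n) • T (x n) + a1 n • T (z n))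
    (hz : ∀ n, z n = (1 - a2 n) • x n + a2 n • T (x n))
    (x' y' z' : ℕ → E) (hxD' : ∀ n, x' n ∈ D) (hyD' : ∀ n, y' n ∈ D) (hzD' : ∀ n, z' n ∈ D)
    (hx' : ∀ n, x' (n + 1) = S (y' n))
    (hy' : ∀ n, y' n = (1 - a1 n) • S (x' n) + a1 n • S (z' n))
    (hz' : ∀ n, z' n = (1 - a2 n) • x' n + a2 n • S (x' n)) :
    ∀ n, ‖x (n + 1) - x' (n + 1)‖ ≤
      (1 - a1 n * a2 n * (1 - δ)) * ‖x n - x' n‖ +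
        a1 n * a2 n * (1 - δ) *
          ((L * δ * (1 + δ) * ‖x n - T (x n)‖ + 2 * L * ‖y n - T (y n)‖ +
            2 * δ * L * ‖z n - T (z n)‖ + 5 * ε) / (1 - δ)) := by
  intro n
  obtain ⟨hδ0, hδ1⟩ := hδ
  obtain ⟨ha10, ha11⟩ := ha1 n
  obtain ⟨ha20, ha21⟩ := ha2 n
  have hp := hhalf n
  have hδ1' : (0:ℝ) < 1 - δ := by linarith
  set A := ‖x n - x' n‖ with hA
  set X := ‖x n - T (x n)‖ with hX
  set Y := ‖y n - T (y n)‖ with hY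
  set Z := ‖z n - T (z n)‖ with hZ
  have hA0 : 0 ≤ A := norm_nonneg _
  have hX0 : 0 ≤ X := norm_nonneg _
  have hY0 : 0 ≤ Y := norm_nonneg _
  have hZ0 : 0 ≤ Z := norm_nonneg _
  -- step 1: ‖T x - S x'‖ ≤ δ A + L X + ε
  have hTx : ‖T (x n) - S (x' n)‖ ≤ δ * A + L * X + ε := by
    calc ‖T (x n) - S (x' n)‖ ≤ ‖T (x n) - T (x' n)‖ + ‖T (x' n) - S (x' n)‖ := by
          simpa using norm_sub_le_norm_sub_add_norm_sub (T (x n)) (T (x' n)) (S (x' n))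
      _ ≤ (δ * ‖x' n - x n‖ + L * ‖x n - T (x n)‖) + ε := by
          refine add_le_add ?_ (happrox _ (hxD' n))
          rw [norm_sub_rev]
          exact hT _ (hxD' n) _ (hxD n)
      _ = δ * A + L * X + ε := by rw [norm_sub_rev (x' n)]
  -- step 2: bound on ‖z - z'‖
  have hZd : ‖z n - z' n‖ ≤ (1 - a2 n) * A + a2 n * (δ * A + L * X + ε) := by
    have heq : z n - z' n = (1 - a2 n) • (x n - x' n) + a2 n • (T (x n) - S (x' n)) := by
      rw [hz, hz']; module
    calc ‖z n - z' n‖ ≤ ‖(1 - a2 n) • (x n - x' n)‖ + ‖a2 n • (T (x n) - S (x' n))‖ := by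
          rw [heq]; exact norm_add_le _ _
      _ = (1 - a2 n) * A + a2 n * ‖T (x n) - S (x' n)‖ := by
          rw [norm_smul, norm_smul, Real.norm_eq_abs, Real.norm_eq_abs,
            abs_of_nonneg (by linarith), abs_of_nonneg ha20]
      _ ≤ (1 - a2 n) * A + a2 n * (δ * A + L * X + ε) := by
          exact add_le_add_right (mul_le_mul_of_nonneg_left hTx ha20) _
  -- step 3: ‖T z - S z'‖
  have hTz : ‖T (z n) - S (z' n)‖ ≤ δ * ‖z n - z' n‖ + L * Z + ε := by
    calc ‖T (z n) - S (z' n)‖ ≤ ‖T (z n) - T (z' n)‖ + ‖T (z' n) - S (z' n)‖ := by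
          simpa using norm_sub_le_norm_sub_add_norm_sub (T (z n)) (T (z' n)) (S (z' n))
      _ ≤ (δ * ‖z' n - z n‖ + L * ‖z n - T (z n)‖) + ε := by
          refine add_le_add ?_ (happrox _ (hzD' n))
          rw [norm_sub_rev]
          exact hT _ (hzD' n) _ (hzD n)
      _ = δ * ‖z n - z' n‖ + L * Z + ε := by rw [norm_sub_rev (z' n)]
  -- step 4: bound on ‖y - y'‖
  have hYd : ‖y n - y' n‖ ≤ (1 - a1 n) * (δ * A + L * X + ε)
      + a1 n * (δ * ((1 - a2 n) * A + a2 n * (δ * A + L * X + ε)) + L * Z + ε) := by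
    have heq : y n - y' n = (1 - a1 n) • (T (x n) - S (x' n))
        + a1 n • (T (z n) - S (z' n)) := by
      rw [hy, hy']; module
    calc ‖y n - y' n‖ ≤ ‖(1 - a1 n) • (T (x n) - S (x' n))‖ + ‖a1 n • (T (z n) - S (z' n))‖ := by
          rw [heq]; exact norm_add_le _ _
      _ = (1 - a1 n) * ‖T (x n) - S (x' n)‖ + a1 n * ‖T (z n) - S (z' n)‖ := by
          rw [norm_smul, norm_smul, Real.norm_eq_abs, Real.norm_eq_abs,
            abs_of_nonneg (by linarith), abs_of_nonneg ha10]
      _ ≤ (1 - a1 n) * (δ * A + L * X + ε)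
          + a1 n * (δ * ((1 - a2 n) * A + a2 n * (δ * A + L * X + ε)) + L * Z + ε) := by
          refine add_le_add (mul_le_mul_of_nonneg_left hTx (by linarith)) ?_
          refine mul_le_mul_of_nonneg_left ?_ ha10
          have : δ * ‖z n - z' n‖ ≤ δ * ((1 - a2 n) * A + a2 n * (δ * A + L * X + ε)) :=
            mul_le_mul_of_nonneg_left hZd (le_of_lt hδ0)
          linarith
  -- step 5: final
  have hfin : ‖x (n + 1) - x' (n + 1)‖ ≤ δ * ‖y n - y' n‖ + L * Y + ε := by
    rw [hx, hx']
    calc ‖T (y n) - S (y' n)‖ ≤ ‖T (y n) - T (y' n)‖ + ‖T (y' n) - S (y' n)‖ := by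
          simpa using norm_sub_le_norm_sub_add_norm_sub (T (y n)) (T (y' n)) (S (y' n))
      _ ≤ (δ * ‖y' n - y n‖ + L * ‖y n - T (y n)‖) + ε := by
          refine add_le_add ?_ (happrox _ (hyD' n))
          rw [norm_sub_rev]
          exact hT _ (hyD' n) _ (hyD n)
      _ = δ * ‖y n - y' n‖ + L * Y + ε := by rw [norm_sub_rev (y' n)]
  have hdivEq : a1 n * a2 n * (1 - δ) *
      ((L * δ * (1 + δ) * X + 2 * L * Y + 2 * δ * L * Z + 5 * ε) / (1 - δ))
      = a1 n * a2 n * (L * δ * (1 + δ) * X + 2 * L * Y + 2 * δ * L * Z + 5 * ε) := by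
    field_simp
  rw [hdivEq]
  have hYd' : δ * ‖y n - y' n‖ ≤ δ * ((1 - a1 n) * (δ * A + L * X + ε)
      + a1 n * (δ * ((1 - a2 n) * A + a2 n * (δ * A + L * X + ε)) + L * Z + ε)) :=
    mul_le_mul_of_nonneg_left hYd (le_of_lt hδ0)
  have haux1 : a1 n * a2 n ≤ a1 n := by nlinarith
  have haux2 : a1 n * a2 n ≤ a2 n := by nlinarith
  have key : δ * ((1 - a1 n) * (δ * A + L * X + ε)
      + a1 n * (δ * ((1 - a2 n) * A + a2 n * (δ * A + L * X + ε)) + L * Z + ε)) + L * Y + ε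
      ≤ (1 - a1 n * a2 n * (1 - δ)) * A
        + a1 n * a2 n * (L * δ * (1 + δ) * X + 2 * L * Y + 2 * δ * L * Z + 5 * ε) := by
    have hp1 : a1 n * a2 n ≤ 1 := le_trans haux1 ha11
    have hp0 : (0:ℝ) ≤ a1 n * a2 n := by linarith
    have hc1 : a1 n * a2 n * (1 - δ) ≤ 1 * (1 - δ) :=
      mul_le_mul_of_nonneg_right hp1 hδ1'.le
    have hd2 : δ^2 ≤ 1 := by nlinarith [sq_nonneg δ, sq_nonneg (1 - δ)]
    have hd2p : δ^2 * (a1 n * a2 n) ≤ 1 * (a1 n * a2 n) :=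
      mul_le_mul_of_nonneg_right hd2 hp0
    have h1 : 0 ≤ (1 - δ^2) * (1 - a1 n * a2 n * (1 - δ)) * A :=
      mul_nonneg (mul_nonneg (by linarith) (by linarith)) hA0
    have h2 : 0 ≤ δ * (a1 n * a2 n - (1 - a1 n)) * (L * X) :=
      mul_nonneg (mul_nonneg hδ0.le (by linarith)) (mul_nonneg hL hX0)
    have h3 : 0 ≤ (2 * (a1 n * a2 n) - 1) * (L * Y) :=
      mul_nonneg (by linarith) (mul_nonneg hL hY0)
    have h4 : 0 ≤ δ * L * (2 * (a1 n * a2 n) - a1 n) * Z :=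
      mul_nonneg (mul_nonneg (mul_nonneg hδ0.le hL)
        (by nlinarith [mul_nonneg ha10 (show (0:ℝ) ≤ 2 * a2 n - 1 by linarith)])) hZ0
    have h5 : 0 ≤ (5 * (a1 n * a2 n) - δ - δ^2 * (a1 n * a2 n) - 1) * ε :=
      mul_nonneg (by linarith) hε.le
    linarith [h1, h2, h3, h4, h5]
  linarith
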